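/- If f is a causal function and a is a strict value of f, then the open set U := {f > a} satisfies J⁺⁺(closure U) ⊆ U, i.e., every point reachable from the closure of U by a nonconstant causal curve lies in U; moreover every point of the boundary ∂U is a regular (nonsingular) point of C. -/

import Mathlib

open Manifold Set MeasureTheory Filter

variable {E : Type*} [NormedAddCommGroup E] [NormedSpace ℝ E]
  {H : Type*} [TopologicalSpace H] {I : ModelWithCorners ℝ E H}
  {M : Type*} [TopologicalSpace M] [ChartedSpace H M] [IsManifold I ((⊤ : ℕ∞) : WithTop ℕ∞) M]

/-- A closed cone field: each fiber is a convex cone, closed after adding `0`, either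
singular (the whole tangent space) or regular (contained in an open half space),
and the union with the zero section is closed in the tangent bundle. -/
def IsClosedConeField (I : ModelWithCorners ℝ E H) (M : Type*) [TopologicalSpace M]
    [ChartedSpace H M] [IsManifold I ((⊤ : ℕ∞) : WithTop ℕ∞) M] (C : ∀ x : M, Set (TangentSpace I x)) : Prop :=
  (∀ x, Convex ℝ (C x)) ∧
  (∀ x, ∀ v ∈ C x, ∀ t : ℝ, 0 < t → t • v ∈ C x) ∧
  (∀ x, IsClosed (insert (0 : TangentSpace I x) (C x))) ∧
  IsClosed {p : TangentBundle I M | p.snd = 0 ∨ p.snd ∈ C p.proj} ∧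
  (∀ x : M, C x = Set.univ ∨ ∃ p : TangentSpace I x →L[ℝ] ℝ, ∀ v ∈ C x, 0 < p v)

/-- A causal curve for the cone field `C` on `[a,b]`: continuous, almost everywhere
differentiable with derivative in the cone (or zero). -/
def IsCausalCurve (C : ∀ x : M, Set (TangentSpace I x)) (γ : ℝ → M) (a b : ℝ) : Prop :=
  ContinuousOn γ (Set.Icc a b) ∧
  ∀ᵐ t ∂(volume.restrict (Set.Icc a b)),
    MDifferentiableAt 𝓘(ℝ, ℝ) I γ t ∧
      mfderiv 𝓘(ℝ, ℝ) I γ t (1 : ℝ) ∈ insert (0 : TangentSpace I (γ t)) (C (γ t))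

/-- The causal future of a point. -/
def causalFuture (C : ∀ x : M, Set (TangentSpace I x)) (x : M) : Set M :=
  insert x {y | ∃ a b : ℝ, a < b ∧ ∃ γ : ℝ → M, IsCausalCurve C γ a b ∧
    γ a = x ∧ γ b = y ∧ ∃ s ∈ Set.Icc a b, ∃ t ∈ Set.Icc a b, γ s ≠ γ t}

/-- A causal function. -/
def IsCausalFun (C : ∀ x : M, Set (TangentSpace I x)) (f : M → ℝ) : Prop :=
  Continuous f ∧ ∀ x, ∀ y ∈ causalFuture C x, f x ≤ f y

/-- A Lyapunov function for `C`. -/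
def IsLyapunov (C : ∀ x : M, Set (TangentSpace I x)) (τ : M → ℝ) : Prop :=
  ContMDiff I 𝓘(ℝ, ℝ) (⊤ : ℕ∞) τ ∧
  ∀ x : M, mfderiv I 𝓘(ℝ, ℝ) τ x ≠ 0 → ∀ v ∈ C x, 0 < show ℝ from mfderiv I 𝓘(ℝ, ℝ) τ x v

/-- A neutral point of a function `f` with respect to `C`. -/
def IsNeutralPt (C : ∀ x : M, Set (TangentSpace I x)) (f : M → ℝ) (x : M) : Prop :=
  C x = Set.univ ∨ ∃ y ∈ causalFuture C x, y ≠ x ∧ f y = f x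

/-- A strict value of `f`. -/
def IsStrictValue (C : ∀ x : M, Set (TangentSpace I x)) (f : M → ℝ) (a : ℝ) : Prop :=
  ¬ ∃ x : M, IsNeutralPt C f x ∧ f x = a

/-- A special causal function. -/
def IsSpecialCausal (C : ∀ x : M, Set (TangentSpace I x)) (f : M → ℝ) : Prop :=
  IsCausalFun C f ∧ Dense {a : ℝ | IsStrictValue C f a}


/-- The strictly causal future of a set. -/
def strictFutureSet (C : ∀ x : M, Set (TangentSpace I x)) (A : Set M) : Set M :=
  {y | ∃ x ∈ A, ∃ a b : ℝ, a < b ∧ ∃ γ : ℝ → M, IsCausalCurve C γ a b ∧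
    γ a = x ∧ γ b = y ∧ ∃ s ∈ Set.Icc a b, ∃ t ∈ Set.Icc a b, γ s ≠ γ t}

lemma isCausalCurve_restrict {C : ∀ x : M, Set (TangentSpace I x)} {γ : ℝ → M}
    {a b s t : ℝ} (h : IsCausalCurve C γ a b) (hs : s ∈ Set.Icc a b) (ht : t ∈ Set.Icc a b) :
    IsCausalCurve C γ s t :=
  ⟨h.1.mono (Set.Icc_subset_Icc hs.1 ht.2),
    h.2.filter_mono (ae_mono (Measure.restrict_mono (Set.Icc_subset_Icc hs.1 ht.2) le_rfl))⟩

lemma mem_causalFuture_of_curve {C : ∀ x : M, Set (TangentSpace I x)} {γ : ℝ → M}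
    {a b s t : ℝ} (h : IsCausalCurve C γ a b) (hs : s ∈ Set.Icc a b) (ht : t ∈ Set.Icc a b)
    (hst : s ≤ t) (hne : γ s ≠ γ t) : γ t ∈ causalFuture C (γ s) := by
  have hlt : s < t := lt_of_le_of_ne hst (by rintro rfl; exact hne rfl)
  exact Set.mem_insert_iff.2 (Or.inr ⟨s, t, hlt, γ, isCausalCurve_restrict h hs ht, rfl, rfl,
    s, ⟨le_rfl, hst⟩, t, ⟨hst, le_rfl⟩, hne⟩)

lemma causal_mono {C : ∀ x : M, Set (TangentSpace I x)} {f : M → ℝ}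
    (hf : IsCausalFun C f) {γ : ℝ → M} {a b s t : ℝ} (h : IsCausalCurve C γ a b)
    (hs : s ∈ Set.Icc a b) (ht : t ∈ Set.Icc a b) (hst : s ≤ t) : f (γ s) ≤ f (γ t) := by
  by_cases hne : γ s = γ t
  · rw [hne]
  · exact hf.2 _ _ (mem_causalFuture_of_curve h hs ht hst hne)

/-- If `a` is a strict value of a causal function `f`, then `U = {f > a}` satisfies
`J⁺⁺(closure U) ⊆ U` and every boundary point of `U` is regular for `C`. -/
theorem strict_value_superlevel (C : ∀ x : M, Set (TangentSpace I x))
    (hC : IsClosedConeField I M C) (f : M → ℝ) (hf : IsCausalFun C f)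
    (a : ℝ) (ha : IsStrictValue C f a) :
    strictFutureSet C (closure {x : M | a < f x}) ⊆ {x : M | a < f x} ∧
      ∀ x ∈ frontier {x : M | a < f x}, C x ≠ Set.univ := by
  have hcl : closure {x : M | a < f x} ⊆ {x : M | a ≤ f x} :=
    closure_minimal (fun z hz => show a ≤ f z from le_of_lt hz) (isClosed_le continuous_const hf.1)
  constructor
  · rintro y ⟨x, hx, a', b', hab, γ, hγ, hγa, hγb, s, hs, t, ht, hne⟩
    have hax : a ≤ f x := hcl hx
    have hxy : f x ≤ f y :=
      hf.2 x y (Set.mem_insert_iff.2 (Or.inr ⟨a', b', hab, γ, hγ, hγa, hγb, s, hs, t, ht, hne⟩))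
    by_contra hya
    have hya' : f y ≤ a := not_lt.1 hya
    -- all relevant values equal a
    set u := min s t
    set v := max s t
    have hu : u ∈ Set.Icc a' b' := ⟨le_min hs.1 ht.1, min_le_of_left_le hs.2⟩
    have hv : v ∈ Set.Icc a' b' := ⟨le_max_of_le_left hs.1, max_le hs.2 ht.2⟩
    have huv : u ≤ v := min_le_max
    have hneuv : γ u ≠ γ v := by
      rcases le_total s t with h | h
      · rw [show u = s from min_eq_left h, show v = t from max_eq_right h]; exact hne
      · rw [show u = t from min_eq_right h, show v = s from max_eq_left h]; exact hne.symm
    have h1 : f (γ a') ≤ f (γ u) := causal_mono hf hγ ⟨le_rfl, le_of_lt hab⟩ hu hu.1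
    have h2 : f (γ u) ≤ f (γ v) := causal_mono hf hγ hu hv huv
    have h3 : f (γ v) ≤ f (γ b') := causal_mono hf hγ hv ⟨le_of_lt hab, le_rfl⟩ hv.2
    rw [hγa] at h1; rw [hγb] at h3
    have hfu : f (γ u) = a := le_antisymm (le_trans h2 (le_trans h3 hya')) (le_trans hax h1)
    have hfv : f (γ v) = a := le_antisymm (le_trans h3 hya') (le_trans hax (le_trans h1 h2))
    exact ha ⟨γ u, Or.inr ⟨γ v, mem_causalFuture_of_curve hγ hu hv huv hneuv,
      hneuv.symm, hfv.trans hfu.symm⟩, hfu⟩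
  · intro x hx hCx
    have h1 : a ≤ f x := hcl hx.1
    have h2 : ¬ a < f x := by
      have : interior {x : M | a < f x} = {x : M | a < f x} :=
        (isOpen_lt continuous_const hf.1).interior_eq
      intro h
      exact hx.2 (by rw [this]; exact h)
    exact ha ⟨x, Or.inl hCx, le_antisymm (not_lt.1 h2) h1⟩
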